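/- For the instance with exactly 2 agents whose true valuations are unary additive and exactly 3 goods, Best-Item-E-C-E has no pure Nash equilibrium: for every bid profile (b_1, b_2) there is an agent i and an alternative bid b'_i such that agent i's true value for her bundle under (b'_i, b_{-i}) is strictly greater than under (b_1, b_2). -/

import Mathlib

/-!
Formalization of the strategic Envy-Cycle-Elimination (E-C-E) setting.

There are `n` agents and `m` goods (`Fin m`), with the predefined ordering of agents
and goods given by the orders on `Fin n` and `Fin m`.  A bid consists of a reported
additive valuation (a nonnegative value for every good) together with a preference
list (a permutation of the goods).  E-C-E starts from empty bundles and, while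
unallocated goods remain, selects a source of the envy graph (according to the rule of
the respective variant), adds one unallocated good to that agent's bundle (again
according to the rule of the respective variant), and then repeatedly eliminates envy
cycles, in a fixed order, until the envy graph has a source.
-/

open scoped Classical
open Finset

/-- A bid of an agent: a reported additive valuation (a nonnegative value for every
good) together with a preference list, a permutation of the goods. -/
structure Bid (m : ℕ) where
  val : Fin m → ℝ
  nonneg : ∀ g, 0 ≤ val g
  pref : Equiv.Perm (Fin m)

namespace ECE

variable {n m : ℕ}

/-- Reported (additive) value of a bundle. -/
noncomputable def bval (b : Bid m) (S : Finset (Fin m)) : ℝ := ∑ g ∈ S, b.val g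

/-- (True, additive) value of a bundle under the valuation `v`. -/
noncomputable def value (v : Fin m → ℝ) (S : Finset (Fin m)) : ℝ := ∑ g ∈ S, v g

/-- Envy-graph edge: agent `i` envies agent `j` (w.r.t. the reported valuations) under
the partial allocation `P`. -/
def envies (b : Fin n → Bid m) (P : Fin n → Finset (Fin m)) (i j : Fin n) : Prop :=
  bval (b i) (P i) < bval (b i) (P j)

/-- The sources (vertices of in-degree 0) of the envy graph. -/
noncomputable def sources (b : Fin n → Bid m) (P : Fin n → Finset (Fin m)) :
    Finset (Fin n) :=
  univ.filter fun i => ∀ j, ¬ envies b P j i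

/-- The envy cycles of the current envy graph, represented as cyclic permutations `σ`
of the agents such that every agent moved by `σ` envies her image under `σ`. -/
noncomputable def cycleSet (b : Fin n → Bid m) (P : Fin n → Finset (Fin m)) :
    Finset (Equiv.Perm (Fin n)) :=
  univ.filter fun σ => σ.IsCycle ∧ ∀ i, σ i ≠ i → envies b P i (σ i)

/-- A fixed enumeration of the permutations of the agents, providing the fixed
(lexicographic) order in which envy cycles are eliminated. -/
noncomputable def permIdx (n : ℕ) :
    Equiv.Perm (Fin n) ≃ Fin (Fintype.card (Equiv.Perm (Fin n))) :=
  Fintype.equivFin _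

/-- Eliminate one envy cycle (the first one in the fixed order): every agent on the
cycle receives the bundle of the agent she envies. -/
noncomputable def elimOnce (b : Fin n → Bid m) (P : Fin n → Finset (Fin m)) :
    Fin n → Finset (Fin m) :=
  if h : (cycleSet b P).Nonempty then
    let σ := (permIdx n).symm (((cycleSet b P).image (permIdx n)).min' (h.image _))
    fun i => P (σ i)
  else P

/-- Repeatedly eliminate envy cycles until the envy graph has a source. -/
noncomputable def resolve (b : Fin n → Bid m) :
    ℕ → (Fin n → Finset (Fin m)) → Fin n → Finset (Fin m)
  | 0, P => P
  | fuel + 1, P => if (sources b P).Nonempty then P else resolve b fuel (elimOnce b P)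

/-- The state (current partial allocation, remaining unallocated goods) of an E-C-E
run after a given number of steps.  In each step, if unallocated goods remain, the
agent chosen by `pickAgent` (a source of the envy graph) receives the good chosen by
`pickItem`, and afterwards envy cycles are eliminated until the graph has a source. -/
noncomputable def stateECE (b : Fin n → Bid m)
    (pickAgent : (Fin n → Finset (Fin m)) → Option (Fin n))
    (pickItem : Fin n → (R : Finset (Fin m)) → R.Nonempty → Fin m) :
    ℕ → (Fin n → Finset (Fin m)) × Finset (Fin m)
  | 0 => (fun _ => ∅, univ)
  | k + 1 =>
    let s := stateECE b pickAgent pickItem k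
    if hR : s.2.Nonempty then
      match pickAgent s.1 with
      | none => s
      | some i =>
        let g := pickItem i s.2 hR
        (resolve b (n * n + 1) (fun j => if j = i then insert g (s.1 j) else s.1 j),
          s.2.erase g)
    else s

/-- Source selection of Standard-E-C-E: among multiple sources, the agent earliest in
the predefined ordering of the agents. -/
noncomputable def stdAgent (b : Fin n → Bid m) (P : Fin n → Finset (Fin m)) :
    Option (Fin n) :=
  if h : (sources b P).Nonempty then some ((sources b P).min' h) else none

/-- Source selection of the Priority variants: among multiple sources, those having at
least one outgoing envy edge have priority, ties broken by the predefined ordering of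
the agents. -/
noncomputable def priAgent (b : Fin n → Bid m) (P : Fin n → Finset (Fin m)) :
    Option (Fin n) :=
  if h' : ((sources b P).filter fun i => ∃ j, envies b P i j).Nonempty then
    some (((sources b P).filter fun i => ∃ j, envies b P i j).min' h')
  else if h : (sources b P).Nonempty then some ((sources b P).min' h) else none

/-- The unallocated good of highest reported value, ties broken by the predefined
ordering of the goods. -/
noncomputable def bestItem (v : Fin m → ℝ) (R : Finset (Fin m)) (hR : R.Nonempty) :
    Fin m :=
  (R.filter fun g => ∀ g' ∈ R, v g' ≤ v g).min' (by
    obtain ⟨g, hg, hmax⟩ := R.exists_max_image v hR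
    exact ⟨g, mem_filter.2 ⟨hg, hmax⟩⟩)

/-- The earliest unallocated good in the preference list `pref`. -/
noncomputable def preferredItem (pref : Equiv.Perm (Fin m)) (R : Finset (Fin m))
    (hR : R.Nonempty) : Fin m :=
  pref.symm ((R.image pref).min' (hR.image _))

/-- Standard-E-C-E: sources chosen by the predefined agent ordering, goods assigned in
the predefined ordering of the goods. -/
noncomputable def Standard (b : Fin n → Bid m) : Fin n → Finset (Fin m) :=
  (stateECE b (stdAgent b) (fun _ R hR => R.min' hR) m).1

/-- Priority-E-C-E: envious sources have priority (ties broken by the agent ordering),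
goods assigned in the predefined ordering of the goods. -/
noncomputable def Priority (b : Fin n → Bid m) : Fin n → Finset (Fin m) :=
  (stateECE b (priAgent b) (fun _ R hR => R.min' hR) m).1

/-- Best-Item-E-C-E: envious sources have priority, and the chosen agent receives her
unallocated good of highest reported value (ties broken by the good ordering). -/
noncomputable def BestItemECE (b : Fin n → Bid m) : Fin n → Finset (Fin m) :=
  (stateECE b (priAgent b) (fun i R hR => bestItem (b i).val R hR) m).1

/-- Preferred-Item-E-C-E: envious sources have priority, and the chosen agent receives
the earliest unallocated good in her preference list. -/
noncomputable def PreferredItemECE (b : Fin n → Bid m) : Fin n → Finset (Fin m) :=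
  (stateECE b (priAgent b) (fun i R hR => preferredItem (b i).pref R hR) m).1

/-- The allocation `A` is `α`-EF1 from agent `i`'s perspective w.r.t. the valuation
`v`: for every agent `j` with nonempty bundle there is a good `g ∈ A j` with
`v (A i) ≥ α · v (A j \ {g})`. -/
def EF1From (α : ℝ) (v : Fin m → ℝ) (A : Fin n → Finset (Fin m)) (i : Fin n) : Prop :=
  ∀ j : Fin n, (A j).Nonempty → ∃ g ∈ A j, α * value v ((A j).erase g) ≤ value v (A i)

/-- The allocation `A` is EF1 w.r.t. the valuations `v`. -/
def IsEF1 (v : Fin n → Fin m → ℝ) (A : Fin n → Finset (Fin m)) : Prop :=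
  ∀ i : Fin n, EF1From 1 (v i) A i

/-- Agent `i`'s bid in the profile `b` is a best response to the others' bids, w.r.t.
her true (additive) valuation `v`: no alternative bid gives her a bundle of strictly
larger true value. -/
def BestResponse (Mech : (Fin n → Bid m) → Fin n → Finset (Fin m))
    (v : Fin m → ℝ) (b : Fin n → Bid m) (i : Fin n) : Prop :=
  ∀ b' : Bid m, value v (Mech (Function.update b i b') i) ≤ value v (Mech b i)

/-- The bid profile `b` is a pure Nash equilibrium of the mechanism `Mech` w.r.t. the
true (additive) valuations `v`. -/
def IsPNE (Mech : (Fin n → Bid m) → Fin n → Finset (Fin m))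
    (v : Fin n → Fin m → ℝ) (b : Fin n → Bid m) : Prop :=
  ∀ i : Fin n, BestResponse Mech (v i) b i

end ECE

open ECE

namespace ECE
variable {n m : ℕ}

lemma bval_nonneg (b : Bid m) (S : Finset (Fin m)) : 0 ≤ bval b S :=
  Finset.sum_nonneg fun g _ => b.nonneg g

lemma not_envies_self (b : Fin n → Bid m) (P) (i : Fin n) : ¬ envies b P i i :=
  lt_irrefl _

lemma not_envies_of_empty {b : Fin n → Bid m} {P} {i j : Fin n} (h : P j = ∅) :
    ¬ envies b P i j := by
  simp only [envies, h, not_lt]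
  simpa [bval] using bval_nonneg (b i) (P i)

lemma mem_sources {b : Fin n → Bid m} {P} {i : Fin n} :
    i ∈ sources b P ↔ ∀ j, ¬ envies b P j i := by simp [sources]

lemma resolve_eq_of_sources {b : Fin n → Bid m} {P} (k : ℕ)
    (h : (sources b P).Nonempty) : resolve b (k+1) P = P := by
  rw [resolve, if_pos h]

lemma stateECE_succ_eq (b : Fin n → Bid m) (pa pi) (k : ℕ) {P R} {i : Fin n}
    (hs : stateECE b pa pi k = (P, R)) (hR : R.Nonempty) (hpa : pa P = some i) :
    stateECE b pa pi (k+1) =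
      (resolve b (n*n+1) (fun j => if j = i then insert (pi i R hR) (P j) else P j),
       R.erase (pi i R hR)) := by
  rw [stateECE, hs]
  simp only [hpa, dif_pos hR]

end ECE

namespace ECE
variable {m : ℕ}

lemma bestItem_spec (v : Fin m → ℝ) (R) (hR : R.Nonempty) :
    bestItem v R hR ∈ R ∧ ∀ g' ∈ R, v g' ≤ v (bestItem v R hR) := by
  have h : bestItem v R hR ∈ R.filter fun g => ∀ g' ∈ R, v g' ≤ v g :=
    Finset.min'_mem _ _
  exact Finset.mem_filter.1 h

lemma bestItem_mem (v : Fin m → ℝ) (R) (hR : R.Nonempty) : bestItem v R hR ∈ R :=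
  (bestItem_spec v R hR).1

lemma bestItem_le (v : Fin m → ℝ) (R) (hR : R.Nonempty) :
    ∀ g' ∈ R, v g' ≤ v (bestItem v R hR) :=
  (bestItem_spec v R hR).2

lemma bestItem_eq_of_max {v : Fin m → ℝ} {R} (hR : R.Nonempty) {x : Fin m}
    (hx : x ∈ R) (h : ∀ g ∈ R, g ≠ x → v g < v x) : bestItem v R hR = x := by
  have hfil : (R.filter fun g => ∀ g' ∈ R, v g' ≤ v g) = {x} := by
    ext g
    simp only [Finset.mem_filter, Finset.mem_singleton]
    constructor
    · rintro ⟨hg, hmax⟩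
      by_contra hne
      exact absurd (hmax x hx) (not_le.2 (h g hg hne))
    · intro hgx
      subst hgx
      refine ⟨hx, fun g' hg' => ?_⟩
      rcases eq_or_ne g' g with rfl | hne
      · exact le_refl _
      · exact (h g' hg' hne).le
  simp [bestItem, hfil]

lemma fin2_eq_one_of_ne_zero : ∀ i : Fin 2, i ≠ 0 → i = 1 := by decide

lemma priAgent_eq_zero {b : Fin 2 → Bid m} {P}
    (h01 : ¬ envies b P 0 1) (h10 : ¬ envies b P 1 0) : priAgent b P = some 0 := by
  have hno : ∀ i j : Fin 2, ¬ envies b P i j := by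
    rw [Fin.forall_fin_two]
    exact ⟨Fin.forall_fin_two.2 ⟨not_envies_self _ _ _, h01⟩,
           Fin.forall_fin_two.2 ⟨h10, not_envies_self _ _ _⟩⟩
  have hs : (0:Fin 2) ∈ sources b P :=
    mem_sources.2 fun j => hno j 0
  have hfil : ((sources b P).filter fun i => ∃ j, envies b P i j) = ∅ :=
    Finset.filter_eq_empty_iff.2 fun i _ => by
      rw [not_exists]; exact fun j => hno i j
  rw [priAgent, dif_neg (by rw [hfil]; simp), dif_pos ⟨0, hs⟩]
  congr 1
  exact le_antisymm (Finset.min'_le _ _ hs) (Fin.zero_le _)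

lemma priAgent_eq_one {b : Fin 2 → Bid m} {P}
    (h01 : ¬ envies b P 0 1) (h10 : envies b P 1 0) : priAgent b P = some 1 := by
  have h1s : (1:Fin 2) ∈ sources b P :=
    mem_sources.2 (Fin.forall_fin_two.2 ⟨h01, not_envies_self _ _ _⟩)
  have h1f : (1:Fin 2) ∈ (sources b P).filter fun i => ∃ j, envies b P i j :=
    Finset.mem_filter.2 ⟨h1s, 0, h10⟩
  rw [priAgent, dif_pos ⟨1, h1f⟩]
  congr 1
  have hmem := Finset.min'_mem ((sources b P).filter fun i => ∃ j, envies b P i j) ⟨1, h1f⟩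
  have hmin := (Finset.mem_filter.1 hmem).1
  refine fin2_eq_one_of_ne_zero _ fun h0 => ?_
  rw [h0] at hmin
  exact (mem_sources.1 hmin 1) h10

end ECE
namespace ECE
variable {n m : ℕ}

def Inv (P : Fin n → Finset (Fin m)) (R : Finset (Fin m)) : Prop :=
  (∀ i j, i ≠ j → Disjoint (P i) (P j)) ∧ ∀ i, Disjoint (P i) R

lemma inv_elimOnce {b : Fin n → Bid m} {P R} (h : Inv P R) : Inv (elimOnce b P) R := by
  rw [elimOnce]
  split_ifs with hc
  · exact ⟨fun i j hij => h.1 _ _ fun he => hij (Equiv.injective _ he), fun i => h.2 _⟩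
  · exact h

lemma inv_resolve {b : Fin n → Bid m} {R} :
    ∀ (fuel : ℕ) {P}, Inv P R → Inv (resolve b fuel P) R
  | 0, P, h => h
  | fuel+1, P, h => by
    rw [resolve]
    split_ifs with hc
    · exact h
    · exact inv_resolve fuel (inv_elimOnce h)

lemma inv_insert {P : Fin n → Finset (Fin m)} {R} (h : Inv P R) {i : Fin n}
    {g : Fin m} (hg : g ∈ R) :
    Inv (fun j => if j = i then insert g (P j) else P j) (R.erase g) := by
  constructor
  · intro j k hjk
    dsimp only
    have hgP : ∀ l : Fin n, g ∉ P l := fun l hl => Finset.disjoint_left.1 (h.2 l) hl hg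
    split_ifs with hj hk hk
    · exact absurd (hj.trans hk.symm) hjk
    · exact Finset.disjoint_insert_left.2 ⟨hgP k, h.1 j k hjk⟩
    · exact Finset.disjoint_insert_right.2 ⟨hgP j, h.1 j k hjk⟩
    · exact h.1 j k hjk
  · intro j
    dsimp only
    have hsub : Disjoint (P j) (R.erase g) :=
      (h.2 j).mono_right (Finset.erase_subset _ _)
    split_ifs with hj
    · exact Finset.disjoint_insert_left.2 ⟨Finset.notMem_erase _ _, hsub⟩
    · exact hsub

lemma inv_stateECE (b : Fin n → Bid m) (pa) (pi)
    (hpi : ∀ (i : Fin n) (R : Finset (Fin m)) (hR : R.Nonempty), pi i R hR ∈ R)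
    (k : ℕ) : Inv (stateECE b pa pi k).1 (stateECE b pa pi k).2 := by
  induction k with
  | zero =>
    exact ⟨fun i j _ => by simp [stateECE], fun i => by simp [stateECE]⟩
  | succ k ih =>
    rw [stateECE]
    by_cases hR : (stateECE b pa pi k).2.Nonempty
    · rcases hpa : pa (stateECE b pa pi k).1 with _ | i
      · simpa [hpa, dif_pos hR] using ih
      · simp only [hpa, dif_pos hR]
        exact inv_resolve _ (inv_insert ⟨ih.1, ih.2⟩ (hpi _ _ _))
    · rw [dif_neg hR]; exact ih

end ECE
namespace ECE
variable {n m : ℕ}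

lemma bval_empty (b : Bid m) : bval b (∅ : Finset (Fin m)) = 0 := by simp [bval]

lemma bval_singleton (b : Bid m) (g : Fin m) : bval b {g} = b.val g := by
  simp [bval]

lemma bval_pair (b : Bid m) {g h : Fin m} (hgh : g ≠ h) :
    bval b (insert g {h}) = b.val g + b.val h := by
  rw [bval, Finset.sum_insert (by simp [hgh]), Finset.sum_singleton]

lemma envies_iff (b : Fin n → Bid m) (P : Fin n → Finset (Fin m)) (i j : Fin n) :
    envies b P i j ↔ bval (b i) (P i) < bval (b i) (P j) := Iff.rfl

lemma lemA (b : Fin 2 → Bid 3) :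
    ∃ b' : Bid 3, 2 ≤ (BestItemECE (Function.update b 0 b') 0).card := by
  classical
  obtain ⟨x, -, hxmin⟩ :=
    Finset.exists_min_image (Finset.univ : Finset (Fin 3)) (b 1).val ⟨0, Finset.mem_univ 0⟩
  have hx : ∀ g, (b 1).val x ≤ (b 1).val g := fun g => hxmin g (Finset.mem_univ g)
  set v : Fin 3 → ℝ := fun g => if g = x then 2 else 1 with hv
  have hvnn : ∀ g, 0 ≤ v g := fun g => by rw [hv]; dsimp only; split_ifs <;> norm_num
  have hvx : v x = 2 := by rw [hv]; simp
  have hvne : ∀ g, g ≠ x → v g = 1 := fun g hg => by rw [hv]; simp [hg]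
  refine ⟨⟨v, hvnn, 1⟩, ?_⟩
  set b' : Bid 3 := ⟨v, hvnn, 1⟩ with hb'
  set c := Function.update b 0 b' with hcdef
  have hc0 : c 0 = b' := Function.update_self _ _ _
  have hc1 : c 1 = b 1 := Function.update_of_ne (by decide) _ _
  set pa := priAgent c with hpa
  set pi : Fin 2 → (R : Finset (Fin 3)) → R.Nonempty → Fin 3 :=
    fun i R hR => bestItem (c i).val R hR with hpi
  have hMech : BestItemECE c = (stateECE c pa pi 3).1 := rfl
  -- step 0
  have h0 : stateECE c pa pi 0 = (fun _ => (∅ : Finset (Fin 3)), Finset.univ) := rfl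
  -- step 1
  have hR0 : (Finset.univ : Finset (Fin 3)).Nonempty := Finset.univ_nonempty
  have hpa0 : pa (fun _ => (∅ : Finset (Fin 3))) = some 0 :=
    priAgent_eq_zero (not_envies_of_empty rfl) (not_envies_of_empty rfl)
  have hitem0 : pi 0 Finset.univ hR0 = x := by
    rw [hpi]; dsimp only; rw [hc0]
    exact bestItem_eq_of_max hR0 (Finset.mem_univ x)
      (fun g _ hgx => by rw [hb']; dsimp only; rw [hvne g hgx, hvx]; norm_num)
  have h1 := stateECE_succ_eq c pa pi 0 h0 hR0 hpa0
  rw [hitem0] at h1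
  set P1 : Fin 2 → Finset (Fin 3) := ![{x}, ∅] with hP1
  have hQ1 : (fun j => if j = (0:Fin 2) then insert x ((fun _ => (∅ : Finset (Fin 3))) j)
      else (fun _ => (∅ : Finset (Fin 3))) j) = P1 := by
    funext j; fin_cases j <;> simp [hP1]
  rw [hQ1] at h1
  have hres1 : resolve c (2*2+1) P1 = P1 :=
    resolve_eq_of_sources (2*2) ⟨1, mem_sources.2 fun j =>
      not_envies_of_empty (show P1 1 = ∅ by rw [hP1]; rfl)⟩
  rw [hres1] at h1
  -- h1 : stateECE c pa pi 1 = (P1, univ.erase x)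
  have hR1card : (Finset.univ.erase x).card = 2 := by
    rw [Finset.card_erase_of_mem (Finset.mem_univ x), Finset.card_univ, Fintype.card_fin]
  have hR1 : (Finset.univ.erase x).Nonempty := Finset.card_pos.1 (by omega)
  have hP10 : P1 0 = {x} := rfl
  have hP11 : P1 1 = ∅ := rfl
  have h01 : ¬ envies c P1 0 1 := by
    rw [envies_iff]
    show ¬ bval (c 0) {x} < bval (c 0) ∅
    rw [hc0, bval_empty, bval_singleton, hb']
    dsimp only
    rw [hvx]; norm_num
  by_cases h10 : envies c P1 1 0
  · -- agent 1 envies; she picks second, agent 0 picks third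
    have hpa1 : pa P1 = some 1 := priAgent_eq_one h01 h10
    have h2 := stateECE_succ_eq c pa pi 1 h1 hR1 hpa1
    set y := pi 1 (Finset.univ.erase x) hR1 with hy
    have hymem : y ∈ Finset.univ.erase x := by rw [hy, hpi]; exact bestItem_mem _ _ _
    have hyx : y ≠ x := (Finset.mem_erase.1 hymem).1
    set P2 : Fin 2 → Finset (Fin 3) := ![{x}, {y}] with hP2
    have hQ2 : (fun j => if j = (1:Fin 2) then insert y (P1 j) else P1 j) = P2 := by
      funext j; fin_cases j <;> simp [hP1, hP2]
    rw [hQ2] at h2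
    have hn10 : ¬ envies c P2 1 0 := by
      rw [envies_iff]
      show ¬ bval (c 1) {y} < bval (c 1) {x}
      rw [hc1, bval_singleton, bval_singleton]
      exact not_lt.2 (hx y)
    have hres2 : resolve c (2*2+1) P2 = P2 :=
      resolve_eq_of_sources (2*2) ⟨0, mem_sources.2 (Fin.forall_fin_two.2
        ⟨not_envies_self _ _ _, hn10⟩)⟩
    rw [hres2] at h2
    have hR2card : ((Finset.univ.erase x).erase y).card = 1 := by
      rw [Finset.card_erase_of_mem hymem, hR1card]
    have hR2 : ((Finset.univ.erase x).erase y).Nonempty := Finset.card_pos.1 (by omega)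
    have h01' : ¬ envies c P2 0 1 := by
      rw [envies_iff]
      show ¬ bval (c 0) {x} < bval (c 0) {y}
      rw [hc0, bval_singleton, bval_singleton, hb']
      dsimp only
      rw [hvx, hvne y hyx]; norm_num
    have hpa2 : pa P2 = some 0 := priAgent_eq_zero h01' hn10
    have h3 := stateECE_succ_eq c pa pi 2 h2 hR2 hpa2
    set z := pi 0 ((Finset.univ.erase x).erase y) hR2 with hz
    have hzmem : z ∈ (Finset.univ.erase x).erase y := by rw [hz, hpi]; exact bestItem_mem _ _ _
    have hzx : z ≠ x := (Finset.mem_erase.1 (Finset.mem_erase.1 hzmem).2).1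
    set P3 : Fin 2 → Finset (Fin 3) := ![insert z {x}, {y}] with hP3
    have hQ3 : (fun j => if j = (0:Fin 2) then insert z (P2 j) else P2 j) = P3 := by
      funext j; fin_cases j <;> simp [hP2, hP3]
    rw [hQ3] at h3
    have hn01 : ¬ envies c P3 0 1 := by
      rw [envies_iff]
      show ¬ bval (c 0) (insert z {x}) < bval (c 0) {y}
      rw [hc0, bval_pair _ hzx, bval_singleton, hb']
      dsimp only
      rw [hvx, hvne y hyx, hvne z hzx]; norm_num
    have hres3 : resolve c (2*2+1) P3 = P3 :=
      resolve_eq_of_sources (2*2) ⟨1, mem_sources.2 (Fin.forall_fin_two.2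
        ⟨hn01, not_envies_self _ _ _⟩)⟩
    rw [hres3] at h3
    rw [hMech, h3]
    show 2 ≤ (insert z ({x} : Finset (Fin 3))).card
    rw [Finset.card_insert_of_notMem (by simp [hzx]), Finset.card_singleton]
  · -- nobody envies; agent 0 picks second
    have hpa1 : pa P1 = some 0 := priAgent_eq_zero h01 h10
    have h2 := stateECE_succ_eq c pa pi 1 h1 hR1 hpa1
    set w := pi 0 (Finset.univ.erase x) hR1 with hw
    have hwmem : w ∈ Finset.univ.erase x := by rw [hw, hpi]; exact bestItem_mem _ _ _
    have hwx : w ≠ x := (Finset.mem_erase.1 hwmem).1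
    set P2 : Fin 2 → Finset (Fin 3) := ![insert w {x}, ∅] with hP2
    have hQ2 : (fun j => if j = (0:Fin 2) then insert w (P1 j) else P1 j) = P2 := by
      funext j; fin_cases j <;> simp [hP1, hP2]
    rw [hQ2] at h2
    have hres2 : resolve c (2*2+1) P2 = P2 :=
      resolve_eq_of_sources (2*2) ⟨1, mem_sources.2 fun j =>
        not_envies_of_empty (show P2 1 = ∅ by rw [hP2]; rfl)⟩
    rw [hres2] at h2
    have hR2card : ((Finset.univ.erase x).erase w).card = 1 := by
      rw [Finset.card_erase_of_mem hwmem, hR1card]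
    have hR2 : ((Finset.univ.erase x).erase w).Nonempty := Finset.card_pos.1 (by omega)
    have h01' : ¬ envies c P2 0 1 := not_envies_of_empty rfl
    by_cases h10' : envies c P2 1 0
    · have hpa2 : pa P2 = some 1 := priAgent_eq_one h01' h10'
      have h3 := stateECE_succ_eq c pa pi 2 h2 hR2 hpa2
      set u := pi 1 ((Finset.univ.erase x).erase w) hR2 with hu
      have humem : u ∈ (Finset.univ.erase x).erase w := by
        rw [hu, hpi]; exact bestItem_mem _ _ _
      have hux : u ≠ x := (Finset.mem_erase.1 (Finset.mem_erase.1 humem).2).1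
      set P3 : Fin 2 → Finset (Fin 3) := ![insert w {x}, {u}] with hP3
      have hQ3 : (fun j => if j = (1:Fin 2) then insert u (P2 j) else P2 j) = P3 := by
        funext j; fin_cases j <;> simp [hP2, hP3]
      rw [hQ3] at h3
      have hn01 : ¬ envies c P3 0 1 := by
        rw [envies_iff]
        show ¬ bval (c 0) (insert w {x}) < bval (c 0) {u}
        rw [hc0, bval_pair _ hwx, bval_singleton, hb']
        dsimp only
        rw [hvx, hvne w hwx, hvne u hux]; norm_num
      have hres3 : resolve c (2*2+1) P3 = P3 :=
        resolve_eq_of_sources (2*2) ⟨1, mem_sources.2 (Fin.forall_fin_two.2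
          ⟨hn01, not_envies_self _ _ _⟩)⟩
      rw [hres3] at h3
      rw [hMech, h3]
      show 2 ≤ (insert w ({x} : Finset (Fin 3))).card
      rw [Finset.card_insert_of_notMem (by simp [hwx]), Finset.card_singleton]
    · have hpa2 : pa P2 = some 0 := priAgent_eq_zero h01' h10'
      have h3 := stateECE_succ_eq c pa pi 2 h2 hR2 hpa2
      set u := pi 0 ((Finset.univ.erase x).erase w) hR2 with hu
      set P3 : Fin 2 → Finset (Fin 3) := ![insert u (insert w {x}), ∅] with hP3
      have hQ3 : (fun j => if j = (0:Fin 2) then insert u (P2 j) else P2 j) = P3 := by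
        funext j; fin_cases j <;> simp [hP2, hP3]
      rw [hQ3] at h3
      have hres3 : resolve c (2*2+1) P3 = P3 :=
        resolve_eq_of_sources (2*2) ⟨1, mem_sources.2 fun j =>
          not_envies_of_empty (show P3 1 = ∅ by rw [hP3]; rfl)⟩
      rw [hres3] at h3
      rw [hMech, h3]
      show 2 ≤ (insert u (insert w ({x} : Finset (Fin 3)))).card
      calc 2 = (insert w ({x} : Finset (Fin 3))).card := by
              rw [Finset.card_insert_of_notMem (by simp [hwx]), Finset.card_singleton]
        _ ≤ (insert u (insert w ({x} : Finset (Fin 3)))).card :=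
              Finset.card_le_card (Finset.subset_insert _ _)

end ECE
namespace ECE

lemma lemB (b : Fin 2 → Bid 3) :
    ∃ b' : Bid 3, 2 ≤ (BestItemECE (Function.update b 1 b') 1).card := by
  classical
  have hR0 : (Finset.univ : Finset (Fin 3)).Nonempty := Finset.univ_nonempty
  set g := bestItem (b 0).val Finset.univ hR0 with hgdef
  have hg : ∀ g', (b 0).val g' ≤ (b 0).val g := fun g' =>
    bestItem_le (b 0).val Finset.univ hR0 g' (Finset.mem_univ g')
  set v : Fin 3 → ℝ := fun h => if h = g then 3 else 2 with hv
  have hvnn : ∀ h, 0 ≤ v h := fun h => by rw [hv]; dsimp only; split_ifs <;> norm_num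
  have hvg : v g = 3 := by rw [hv]; simp
  have hvne : ∀ h, h ≠ g → v h = 2 := fun h hh => by rw [hv]; simp [hh]
  refine ⟨⟨v, hvnn, 1⟩, ?_⟩
  set b' : Bid 3 := ⟨v, hvnn, 1⟩ with hb'
  set c := Function.update b 1 b' with hcdef
  have hc0 : c 0 = b 0 := Function.update_of_ne (by decide) _ _
  have hc1 : c 1 = b' := Function.update_self _ _ _
  set pa := priAgent c with hpa
  set pi : Fin 2 → (R : Finset (Fin 3)) → R.Nonempty → Fin 3 :=
    fun i R hR => bestItem (c i).val R hR with hpi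
  have hMech : BestItemECE c = (stateECE c pa pi 3).1 := rfl
  have h0 : stateECE c pa pi 0 = (fun _ => (∅ : Finset (Fin 3)), Finset.univ) := rfl
  -- step 1: agent 0 takes g
  have hpa0 : pa (fun _ => (∅ : Finset (Fin 3))) = some 0 :=
    priAgent_eq_zero (not_envies_of_empty rfl) (not_envies_of_empty rfl)
  have hitem0 : pi 0 Finset.univ hR0 = g := by rw [hpi]; dsimp only; rw [hc0]
  have h1 := stateECE_succ_eq c pa pi 0 h0 hR0 hpa0
  rw [hitem0] at h1
  set P1 : Fin 2 → Finset (Fin 3) := ![{g}, ∅] with hP1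
  have hQ1 : (fun j => if j = (0:Fin 2) then insert g ((fun _ => (∅ : Finset (Fin 3))) j)
      else (fun _ => (∅ : Finset (Fin 3))) j) = P1 := by
    funext j; fin_cases j <;> simp [hP1]
  rw [hQ1] at h1
  have hres1 : resolve c (2*2+1) P1 = P1 :=
    resolve_eq_of_sources (2*2) ⟨1, mem_sources.2 fun j =>
      not_envies_of_empty (show P1 1 = ∅ by rw [hP1]; rfl)⟩
  rw [hres1] at h1
  have hR1card : (Finset.univ.erase g).card = 2 := by
    rw [Finset.card_erase_of_mem (Finset.mem_univ g), Finset.card_univ, Fintype.card_fin]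
  have hR1 : (Finset.univ.erase g).Nonempty := Finset.card_pos.1 (by omega)
  -- step 2: agent 1 envies and takes u
  have h01 : ¬ envies c P1 0 1 := not_envies_of_empty rfl
  have h10 : envies c P1 1 0 := by
    rw [envies_iff]
    show bval (c 1) ∅ < bval (c 1) {g}
    rw [hc1, bval_empty, bval_singleton, hb']
    dsimp only
    rw [hvg]; norm_num
  have hpa1 : pa P1 = some 1 := priAgent_eq_one h01 h10
  have h2 := stateECE_succ_eq c pa pi 1 h1 hR1 hpa1
  set u := pi 1 (Finset.univ.erase g) hR1 with hu
  have humem : u ∈ Finset.univ.erase g := by rw [hu, hpi]; exact bestItem_mem _ _ _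
  have hug : u ≠ g := (Finset.mem_erase.1 humem).1
  set P2 : Fin 2 → Finset (Fin 3) := ![{g}, {u}] with hP2
  have hQ2 : (fun j => if j = (1:Fin 2) then insert u (P1 j) else P1 j) = P2 := by
    funext j; fin_cases j <;> simp [hP1, hP2]
  rw [hQ2] at h2
  have hn01 : ¬ envies c P2 0 1 := by
    rw [envies_iff]
    show ¬ bval (c 0) {g} < bval (c 0) {u}
    rw [hc0, bval_singleton, bval_singleton]
    exact not_lt.2 (hg u)
  have hres2 : resolve c (2*2+1) P2 = P2 :=
    resolve_eq_of_sources (2*2) ⟨1, mem_sources.2 (Fin.forall_fin_two.2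
      ⟨hn01, not_envies_self _ _ _⟩)⟩
  rw [hres2] at h2
  have hR2card : ((Finset.univ.erase g).erase u).card = 1 := by
    rw [Finset.card_erase_of_mem humem, hR1card]
  have hR2 : ((Finset.univ.erase g).erase u).Nonempty := Finset.card_pos.1 (by omega)
  -- step 3: agent 1 still envies and takes w
  have h10' : envies c P2 1 0 := by
    rw [envies_iff]
    show bval (c 1) {u} < bval (c 1) {g}
    rw [hc1, bval_singleton, bval_singleton, hb']
    dsimp only
    rw [hvg, hvne u hug]; norm_num
  have hpa2 : pa P2 = some 1 := priAgent_eq_one hn01 h10'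
  have h3 := stateECE_succ_eq c pa pi 2 h2 hR2 hpa2
  set w := pi 1 ((Finset.univ.erase g).erase u) hR2 with hw
  have hwmem : w ∈ (Finset.univ.erase g).erase u := by
    rw [hw, hpi]; exact bestItem_mem _ _ _
  have hwu : w ≠ u := (Finset.mem_erase.1 hwmem).1
  have hwg : w ≠ g := (Finset.mem_erase.1 (Finset.mem_erase.1 hwmem).2).1
  set P3 : Fin 2 → Finset (Fin 3) := ![{g}, insert w {u}] with hP3
  have hQ3 : (fun j => if j = (1:Fin 2) then insert w (P2 j) else P2 j) = P3 := by
    funext j; fin_cases j <;> simp [hP2, hP3]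
  rw [hQ3] at h3
  have hn10 : ¬ envies c P3 1 0 := by
    rw [envies_iff]
    show ¬ bval (c 1) (insert w {u}) < bval (c 1) {g}
    rw [hc1, bval_pair _ hwu, bval_singleton, hb']
    dsimp only
    rw [hvg, hvne u hug, hvne w hwg]; norm_num
  have hres3 : resolve c (2*2+1) P3 = P3 :=
    resolve_eq_of_sources (2*2) ⟨0, mem_sources.2 (Fin.forall_fin_two.2
      ⟨not_envies_self _ _ _, hn10⟩)⟩
  rw [hres3] at h3
  rw [hMech, h3]
  show 2 ≤ (insert w ({u} : Finset (Fin 3))).card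
  rw [Finset.card_insert_of_notMem (by simp [hwu]), Finset.card_singleton]

end ECE

open ECE

/-- For the instance with exactly 2 agents whose true valuations are
unary additive and exactly 3 goods, Best-Item-E-C-E has no pure Nash equilibrium: for
every bid profile there is an agent and an alternative bid that strictly improves her
true value. -/
theorem bestItem_two_unary_three_goods_no_PNE (b : Fin 2 → Bid 3) :
    ∃ (i : Fin 2) (b' : Bid 3),
      value (fun _ => (1 : ℝ)) (BestItemECE b i) <
        value (fun _ => (1 : ℝ)) (BestItemECE (Function.update b i b') i) := by
  have hval : ∀ S : Finset (Fin 3), value (fun _ => (1:ℝ)) S = (S.card : ℝ) := by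
    intro S; simp [value]
  have hinv := inv_stateECE b (priAgent b)
    (fun i R hR => bestItem (b i).val R hR) (fun i R hR => bestItem_mem _ _ _) 3
  have hB : BestItemECE b =
      (stateECE b (priAgent b) (fun i R hR => bestItem (b i).val R hR) 3).1 := rfl
  have hdisj : Disjoint (BestItemECE b 0) (BestItemECE b 1) := by
    rw [hB]; exact hinv.1 0 1 (by decide)
  have hsum : (BestItemECE b 0).card + (BestItemECE b 1).card ≤ 3 := by
    rw [← Finset.card_union_of_disjoint hdisj]
    calc (BestItemECE b 0 ∪ BestItemECE b 1).card
        ≤ (Finset.univ : Finset (Fin 3)).card :=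
          Finset.card_le_card (Finset.subset_univ _)
      _ = 3 := by rw [Finset.card_univ, Fintype.card_fin]
  by_cases h : (BestItemECE b 0).card ≤ 1
  · obtain ⟨b', hb'⟩ := lemA b
    refine ⟨0, b', ?_⟩
    rw [hval, hval]
    exact_mod_cast lt_of_le_of_lt h (lt_of_lt_of_le one_lt_two hb')
  · obtain ⟨b', hb'⟩ := lemB b
    refine ⟨1, b', ?_⟩
    rw [hval, hval]
    have h1 : (BestItemECE b 1).card ≤ 1 := by omega
    exact_mod_cast lt_of_le_of_lt h1 (lt_of_lt_of_le one_lt_two hb')
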